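/- Basic energy estimate: there exist constants C > 0 and c₀ > 0 such that for every ξ ∈ ℝ and every differentiable function V : [0,∞) → ℂ³ satisfying the linear ODE V'(t) = −(i·ξ·Ã(ξ) + ξ²·B̃)·V(t) for all t ≥ 0 (the real matrices acting on ℂ³ by complexification), one has |V(t)| ≤ C·exp(−c₀·ξ²·t)·|V(0)| for all t ≥ 0; the constants C and c₀ are independent of ξ and of V. -/

import Mathlib

open Matrix

set_option maxHeartbeats 1000000

-- bracket quadratic form lemma
lemma nsfk_aux_bracket (m a δ w1 Km e1 e2 p1 q1 p2 q2 p3 q3 : ℝ)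
    (hδ : 0 < δ) (he1 : 0 ≤ e1) (he1sq : e1^2 ≤ w1^2) (he2 : e2^2 ≤ Km^2)
    (hδ2 : δ * (3/2 + 4*Km^2) ≤ 2*m) (hδ3 : δ * (1/2 + 4*w1^2) ≤ 2*a) :
    δ/2 * ((p1^2+q1^2) + (p2^2+q2^2) + (p3^2+q3^2)) ≤
      2*m*(p2^2+q2^2) + 2*a*(p3^2+q3^2) + δ*((p1^2+q1^2) - (p2^2+q2^2))
        + δ*e1*(p1*p3+q1*q3) - δ*e2*(q1*p2 - p1*q2) := by
  nlinarith [mul_nonneg hδ.le (sq_nonneg (p1/4 + 2*e1*p3)),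
    mul_nonneg hδ.le (sq_nonneg (q1/4 + 2*e1*q3)),
    mul_nonneg hδ.le (sq_nonneg (q1/4 - 2*e2*p2)),
    mul_nonneg hδ.le (sq_nonneg (p1/4 + 2*e2*q2)),
    mul_nonneg (mul_nonneg hδ.le (sub_nonneg.mpr he1sq)) (add_nonneg (sq_nonneg p3) (sq_nonneg q3)),
    mul_nonneg (mul_nonneg hδ.le (sub_nonneg.mpr he2)) (add_nonneg (sq_nonneg p2) (sq_nonneg q2)),
    mul_nonneg (sub_nonneg.mpr hδ2) (add_nonneg (sq_nonneg p2) (sq_nonneg q2)),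
    mul_nonneg (sub_nonneg.mpr hδ3) (add_nonneg (sq_nonneg p3) (sq_nonneg q3))]

lemma nsfk_aux_cmp (f p1 q1 p2 q2 : ℝ) (hf : f^2 ≤ 1) :
    |f*(q1*p2 - p1*q2)| ≤ ((p1^2+q1^2)+(p2^2+q2^2))/2 := by
  rw [abs_le]
  constructor <;>
  nlinarith [sq_nonneg (q1 - f*p2), sq_nonneg (p1 + f*q2), sq_nonneg (q1 + f*p2),
    sq_nonneg (p1 - f*q2), mul_nonneg (sub_nonneg.mpr hf) (add_nonneg (sq_nonneg p2) (sq_nonneg q2))]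


lemma nsfk_norm_sq (z : ℂ) : ‖z‖^2 = z.re^2 + z.im^2 := by
  rw [← Complex.normSq_eq_norm_sq, Complex.normSq_apply]; ring

lemma nsfk_main_aux (u b cc m a δ ξ K w1 : ℝ) (hb : 0 < b) (hm : 0 < m) (ha : 0 < a)
    (hcc : 0 ≤ cc) (hδ : 0 < δ)
    (hδ1 : (δ*(ξ/b))^2 ≤ 1) (hδ2 : δ*(3/2+4*(m*K)^2) ≤ 2*m) (hδ3 : δ*(1/2+4*w1^2) ≤ 2*a)
    (he1w : cc/b ≤ w1) (he2 : (ξ*m/b)^2 ≤ (m*K)^2)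
    (V : ℝ → Fin 3 → ℂ)
    (hV : ∀ t, 0 ≤ t → HasDerivAt V
      (-(((Complex.I * (ξ:ℂ)) • ((!![u, b, 0; b, u, cc; 0, cc, u]).map (fun x : ℝ => (x:ℂ)))
         + ((ξ:ℂ)^2) • ((!![0,0,0;0,m,0;0,0,a]).map (fun x : ℝ => (x:ℂ)))).mulVec (V t))) t)
    (t : ℝ) (ht : 0 ≤ t) :
    ‖V t‖ ≤ 3 * Real.exp (-(δ/6) * ξ^2 * t) * ‖V 0‖ := by
  have hbne : b ≠ 0 := hb.ne'
  -- the energy functional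
  set E : ℝ → ℝ := fun s =>
    ((V s 0).re*(V s 0).re + (V s 0).im*(V s 0).im
      + ((V s 1).re*(V s 1).re + (V s 1).im*(V s 1).im)
      + ((V s 2).re*(V s 2).re + (V s 2).im*(V s 2).im))
    - δ*(ξ/b) * ((V s 0).im*(V s 1).re - (V s 0).re*(V s 1).im) with hEdef
  -- derivative of E
  have hE : ∀ τ : ℝ, 0 ≤ τ → HasDerivAt E
      (-(ξ^2) * (2*m*((V τ 1).re^2+(V τ 1).im^2) + 2*a*((V τ 2).re^2+(V τ 2).im^2)
        + δ*(((V τ 0).re^2+(V τ 0).im^2) - ((V τ 1).re^2+(V τ 1).im^2))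
        + δ*(cc/b)*((V τ 0).re*(V τ 2).re+(V τ 0).im*(V τ 2).im)
        - δ*(ξ*m/b)*((V τ 0).im*(V τ 1).re - (V τ 0).re*(V τ 1).im))) τ := by
    intro τ hτ
    have h0 := hasDerivAt_pi.mp (hV τ hτ) 0
    have h1 := hasDerivAt_pi.mp (hV τ hτ) 1
    have h2 := hasDerivAt_pi.mp (hV τ hτ) 2
    have h0' : HasDerivAt (fun s => V s 0)
        (-(Complex.I*ξ*u*V τ 0 + Complex.I*ξ*b*V τ 1)) τ := by
      refine (h0).congr_deriv ?_
      simp [Matrix.mulVec, dotProduct, Fin.sum_univ_three] <;> ring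
    have h1' : HasDerivAt (fun s => V s 1)
        (-(Complex.I*ξ*b*V τ 0 + Complex.I*ξ*u*V τ 1 + Complex.I*ξ*cc*V τ 2 + (ξ:ℂ)^2*m*V τ 1)) τ := by
      refine (h1).congr_deriv ?_
      simp [Matrix.mulVec, dotProduct, Fin.sum_univ_three] <;> ring
    have h2' : HasDerivAt (fun s => V s 2)
        (-(Complex.I*ξ*cc*V τ 1 + Complex.I*ξ*u*V τ 2 + (ξ:ℂ)^2*a*V τ 2)) τ := by
      refine (h2).congr_deriv ?_
      simp [Matrix.mulVec, dotProduct, Fin.sum_univ_three] <;> ring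
    have hp1 : HasDerivAt (fun s => (V s 0).re) (ξ*u*(V τ 0).im + ξ*b*(V τ 1).im) τ := by
      refine (Complex.reCLM.hasFDerivAt.comp_hasDerivAt τ h0').congr_deriv ?_
      simp [← Complex.ofReal_pow] <;> ring
    have hq1 : HasDerivAt (fun s => (V s 0).im) (-(ξ*u*(V τ 0).re + ξ*b*(V τ 1).re)) τ := by
      refine (Complex.imCLM.hasFDerivAt.comp_hasDerivAt τ h0').congr_deriv ?_
      simp [← Complex.ofReal_pow] <;> ring
    have hp2 : HasDerivAt (fun s => (V s 1).re)
        (ξ*b*(V τ 0).im + ξ*u*(V τ 1).im + ξ*cc*(V τ 2).im - ξ^2*m*(V τ 1).re) τ := by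
      refine (Complex.reCLM.hasFDerivAt.comp_hasDerivAt τ h1').congr_deriv ?_
      simp [← Complex.ofReal_pow] <;> ring
    have hq2 : HasDerivAt (fun s => (V s 1).im)
        (-(ξ*b*(V τ 0).re + ξ*u*(V τ 1).re + ξ*cc*(V τ 2).re) - ξ^2*m*(V τ 1).im) τ := by
      refine (Complex.imCLM.hasFDerivAt.comp_hasDerivAt τ h1').congr_deriv ?_
      simp [← Complex.ofReal_pow] <;> ring
    have hp3 : HasDerivAt (fun s => (V s 2).re)
        (ξ*cc*(V τ 1).im + ξ*u*(V τ 2).im - ξ^2*a*(V τ 2).re) τ := by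
      refine (Complex.reCLM.hasFDerivAt.comp_hasDerivAt τ h2').congr_deriv ?_
      simp [← Complex.ofReal_pow] <;> ring
    have hq3 : HasDerivAt (fun s => (V s 2).im)
        (-(ξ*cc*(V τ 1).re + ξ*u*(V τ 2).re) - ξ^2*a*(V τ 2).im) τ := by
      refine (Complex.imCLM.hasFDerivAt.comp_hasDerivAt τ h2').congr_deriv ?_
      simp [← Complex.ofReal_pow] <;> ring
    have hraw := ((((hp1.mul hp1).add (hq1.mul hq1)).add
        ((hp2.mul hp2).add (hq2.mul hq2))).add
        ((hp3.mul hp3).add (hq3.mul hq3))).sub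
        (((hq1.mul hp2).sub (hp1.mul hq2)).const_mul (δ*(ξ/b)))
    refine (hraw).congr_deriv ?_
    field_simp
    ring
  -- comparison between E and the sum of squares N
  have hcmp : ∀ τ : ℝ,
      (((V τ 0).re^2+(V τ 0).im^2) + ((V τ 1).re^2+(V τ 1).im^2) + ((V τ 2).re^2+(V τ 2).im^2))/2
        ≤ E τ ∧
      E τ ≤ 3/2 * (((V τ 0).re^2+(V τ 0).im^2) + ((V τ 1).re^2+(V τ 1).im^2)
        + ((V τ 2).re^2+(V τ 2).im^2)) := by
    intro τ
    have h := abs_le.mp (nsfk_aux_cmp (δ*(ξ/b)) (V τ 0).re (V τ 0).im (V τ 1).re (V τ 1).im hδ1)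
    constructor <;>
      (simp only [hEdef]; nlinarith [h.1, h.2, sq_nonneg (V τ 2).re, sq_nonneg (V τ 2).im])
  set g : ℝ → ℝ := fun s => E s * Real.exp ((δ/3)*ξ^2*s) with hgdef
  have hg : ∀ τ : ℝ, 0 ≤ τ → HasDerivAt g
      ((-(ξ^2) * (2*m*((V τ 1).re^2+(V τ 1).im^2) + 2*a*((V τ 2).re^2+(V τ 2).im^2)
        + δ*(((V τ 0).re^2+(V τ 0).im^2) - ((V τ 1).re^2+(V τ 1).im^2))
        + δ*(cc/b)*((V τ 0).re*(V τ 2).re+(V τ 0).im*(V τ 2).im)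
        - δ*(ξ*m/b)*((V τ 0).im*(V τ 1).re - (V τ 0).re*(V τ 1).im)))
        * Real.exp ((δ/3)*ξ^2*τ)
        + E τ * (Real.exp ((δ/3)*ξ^2*τ) * ((δ/3)*ξ^2*1))) τ :=
    fun τ hτ => (hE τ hτ).mul (((hasDerivAt_id τ).const_mul ((δ/3)*ξ^2)).exp)
  have hmono : AntitoneOn g (Set.Ici (0:ℝ)) := by
    apply antitoneOn_of_deriv_nonpos (convex_Ici 0)
    · exact fun τ hτ => ((hg τ hτ).continuousAt).continuousWithinAt
    · rw [interior_Ici]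
      exact fun τ hτ => ((hg τ hτ.le).differentiableAt).differentiableWithinAt
    · rw [interior_Ici]
      intro τ hτ
      rw [(hg τ hτ.le).deriv]
      have he1sq : (cc/b)^2 ≤ w1^2 :=
        pow_le_pow_left₀ (by positivity) he1w 2
      have hbr := nsfk_aux_bracket m a δ w1 (m*K) (cc/b) (ξ*m/b)
        (V τ 0).re (V τ 0).im (V τ 1).re (V τ 1).im (V τ 2).re (V τ 2).im
        hδ (by positivity) he1sq he2 hδ2 hδ3
      have hcm2 := (hcmp τ).2
      have t1 := mul_le_mul_of_nonneg_left hbr (sq_nonneg ξ)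
      have t2 := mul_le_mul_of_nonneg_left hcm2
        (mul_nonneg (by positivity : (0:ℝ) ≤ δ/3) (sq_nonneg ξ))
      have hsum : (-(ξ^2) * (2*m*((V τ 1).re^2+(V τ 1).im^2) + 2*a*((V τ 2).re^2+(V τ 2).im^2)
          + δ*(((V τ 0).re^2+(V τ 0).im^2) - ((V τ 1).re^2+(V τ 1).im^2))
          + δ*(cc/b)*((V τ 0).re*(V τ 2).re+(V τ 0).im*(V τ 2).im)
          - δ*(ξ*m/b)*((V τ 0).im*(V τ 1).re - (V τ 0).re*(V τ 1).im)))
          + ((δ/3)*ξ^2*1) * E τ ≤ 0 := by nlinarith [t1, t2]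
      have := mul_le_mul_of_nonneg_right hsum (Real.exp_nonneg ((δ/3)*ξ^2*τ))
      nlinarith [this]
  -- Gronwall conclusion
  have hEt : E t * Real.exp ((δ/3)*ξ^2*t) ≤ E 0 := by
    have h := hmono (Set.self_mem_Ici) (show t ∈ Set.Ici (0:ℝ) from ht) ht
    simpa [hgdef] using h
  clear_value g E
  have hexppos : (0:ℝ) < Real.exp (-((δ/3)*ξ^2*t)) := Real.exp_pos _
  have hEt' : E t ≤ E 0 * Real.exp (-((δ/3)*ξ^2*t)) := by
    have h2 := mul_le_mul_of_nonneg_right hEt hexppos.le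
    calc E t = E t * Real.exp ((δ/3)*ξ^2*t) * Real.exp (-((δ/3)*ξ^2*t)) := by
          rw [mul_assoc, ← Real.exp_add]; simp
      _ ≤ E 0 * Real.exp (-((δ/3)*ξ^2*t)) := h2
  -- norms vs sums of squares
  have hnt : ‖V t‖^2 ≤ ((V t 0).re^2+(V t 0).im^2) + ((V t 1).re^2+(V t 1).im^2)
      + ((V t 2).re^2+(V t 2).im^2) := by
    have h1 : ∀ i, ‖V t i‖ ≤ Real.sqrt (((V t 0).re^2+(V t 0).im^2)
        + ((V t 1).re^2+(V t 1).im^2) + ((V t 2).re^2+(V t 2).im^2)) := by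
      have key : ∀ i : Fin 3, (V t i).re^2 + (V t i).im^2 ≤ ((V t 0).re^2+(V t 0).im^2)
          + ((V t 1).re^2+(V t 1).im^2) + ((V t 2).re^2+(V t 2).im^2) := by
        intro i
        have s1 := sq_nonneg (V t 0).re; have s2 := sq_nonneg (V t 0).im
        have s3 := sq_nonneg (V t 1).re; have s4 := sq_nonneg (V t 1).im
        have s5 := sq_nonneg (V t 2).re; have s6 := sq_nonneg (V t 2).im
        match i with
        | 0 => linarith
        | 1 => linarith
        | 2 => linarith
      intro i
      rw [← Real.sqrt_sq (norm_nonneg (V t i))]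
      apply Real.sqrt_le_sqrt
      rw [nsfk_norm_sq]
      exact key i
    have h2 : ‖V t‖ ≤ Real.sqrt (((V t 0).re^2+(V t 0).im^2)
        + ((V t 1).re^2+(V t 1).im^2) + ((V t 2).re^2+(V t 2).im^2)) :=
      (pi_norm_le_iff_of_nonneg (Real.sqrt_nonneg _)).mpr h1
    calc ‖V t‖^2 ≤ (Real.sqrt (((V t 0).re^2+(V t 0).im^2)
          + ((V t 1).re^2+(V t 1).im^2) + ((V t 2).re^2+(V t 2).im^2)))^2 :=
        pow_le_pow_left₀ (norm_nonneg _) h2 2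
      _ = _ := Real.sq_sqrt (by positivity)
  have hn0 : ((V 0 0).re^2+(V 0 0).im^2) + ((V 0 1).re^2+(V 0 1).im^2)
      + ((V 0 2).re^2+(V 0 2).im^2) ≤ 3 * ‖V 0‖^2 := by
    have h0 : (V 0 0).re^2+(V 0 0).im^2 ≤ ‖V 0‖^2 := by
      rw [← nsfk_norm_sq]; exact pow_le_pow_left₀ (norm_nonneg _) (norm_le_pi_norm (V 0) 0) 2
    have h1 : (V 0 1).re^2+(V 0 1).im^2 ≤ ‖V 0‖^2 := by
      rw [← nsfk_norm_sq]; exact pow_le_pow_left₀ (norm_nonneg _) (norm_le_pi_norm (V 0) 1) 2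
    have h2 : (V 0 2).re^2+(V 0 2).im^2 ≤ ‖V 0‖^2 := by
      rw [← nsfk_norm_sq]; exact pow_le_pow_left₀ (norm_nonneg _) (norm_le_pi_norm (V 0) 2) 2
    linarith
  have hexpsq : Real.exp (-(δ/6)*ξ^2*t) ^ 2 = Real.exp (-((δ/3)*ξ^2*t)) := by
    rw [sq, ← Real.exp_add]; congr 1; ring
  have hfin : ‖V t‖^2 ≤ (3 * Real.exp (-(δ/6)*ξ^2*t) * ‖V 0‖)^2 := by
    have c2 := (hcmp t).1
    have c3 := (hcmp 0).2
    have e0 := hexppos.le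
    have d1 := mul_le_mul_of_nonneg_right c3 e0
    have d2 := mul_le_mul_of_nonneg_right hn0 e0
    calc ‖V t‖^2 ≤ 2 * E t := by linarith
      _ ≤ 2 * (E 0 * Real.exp (-((δ/3)*ξ^2*t))) := by linarith
      _ ≤ 9 * ‖V 0‖^2 * Real.exp (-((δ/3)*ξ^2*t)) := by nlinarith [d1, d2]
      _ = (3 * Real.exp (-(δ/6)*ξ^2*t) * ‖V 0‖)^2 := by
          rw [mul_pow, mul_pow, hexpsq]; ring
  calc ‖V t‖ = Real.sqrt (‖V t‖^2) := (Real.sqrt_sq (norm_nonneg _)).symm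
    _ ≤ Real.sqrt ((3 * Real.exp (-(δ/6)*ξ^2*t) * ‖V 0‖)^2) := Real.sqrt_le_sqrt hfin
    _ = 3 * Real.exp (-(δ/6)*ξ^2*t) * ‖V 0‖ := Real.sqrt_sq (by positivity)


/-- Basic energy estimate: solutions of `V' = −(iξÃ(ξ) + ξ²B̃)V` decay like
`exp(−c₀ξ²t)`, with constants independent of `ξ` and of the solution. -/
theorem nsfk_basic_energy_estimate (ρ θ pρ pθ eθ k μ α u : ℝ)
    (hρ : 0 < ρ) (hθ : 0 < θ) (hpρ : 0 < pρ) (hpθ : 0 < pθ) (heθ : 0 < eθ)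
    (hk : 0 < k) (hμ : 0 < μ) (hα : 0 < α) :
    ∃ C : ℝ, 0 < C ∧ ∃ c₀ : ℝ, 0 < c₀ ∧
      ∀ ξ : ℝ,
        let β : ℝ := pρ + ξ ^ 2 * k * ρ
        let c : ℝ := pθ * Real.sqrt θ / (Real.sqrt eθ * ρ)
        let Atilde : Matrix (Fin 3) (Fin 3) ℂ :=
          (!![u, Real.sqrt β, 0; Real.sqrt β, u, c; 0, c, u]).map
            (fun x : ℝ => (x : ℂ))
        let Btilde : Matrix (Fin 3) (Fin 3) ℂ :=
          (!![0, 0, 0; 0, μ / ρ, 0; 0, 0, α / (eθ * ρ)]).map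
            (fun x : ℝ => (x : ℂ))
        ∀ V : ℝ → (Fin 3 → ℂ),
          (∀ t : ℝ, 0 ≤ t →
            HasDerivAt V
              (-(((Complex.I * (ξ : ℂ)) • Atilde + ((ξ : ℂ) ^ 2) • Btilde).mulVec (V t))) t) →
          ∀ t : ℝ, 0 ≤ t →
            ‖V t‖ ≤ C * Real.exp (-c₀ * ξ ^ 2 * t) * ‖V 0‖ := by
  have hkρ : (0:ℝ) < k * ρ := by positivity
  obtain ⟨δ, hδ, hδle1, hδ2, hδ3⟩ :
      ∃ δ : ℝ, 0 < δ ∧ δ ≤ Real.sqrt (k*ρ) ∧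
        δ*(3/2+4*((μ/ρ)*(Real.sqrt (k*ρ))⁻¹)^2) ≤ 2*(μ/ρ) ∧
        δ*(1/2+4*(pθ * Real.sqrt θ / (Real.sqrt eθ * ρ) / Real.sqrt pρ)^2) ≤ 2*(α/(eθ*ρ)) := by
    refine ⟨min (min (Real.sqrt (k*ρ))
        (2*(μ/ρ)/(3/2+4*((μ/ρ)*(Real.sqrt (k*ρ))⁻¹)^2)))
        (2*(α/(eθ*ρ))/(1/2+4*(pθ * Real.sqrt θ / (Real.sqrt eθ * ρ) / Real.sqrt pρ)^2)),
      ?_, ?_, ?_, ?_⟩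
    · refine lt_min (lt_min ?_ ?_) ?_ <;> positivity
    · exact le_trans (min_le_left _ _) (min_le_left _ _)
    · exact (le_div_iff₀ (by positivity)).mp (le_trans (min_le_left _ _) (min_le_right _ _))
    · exact (le_div_iff₀ (by positivity)).mp (min_le_right _ _)
  refine ⟨3, by norm_num, δ/6, by positivity, ?_⟩
  intro ξ β c Atilde Btilde V hV t ht
  have hβ : β = pρ + ξ^2*k*ρ := rfl
  have hc : c = pθ * Real.sqrt θ / (Real.sqrt eθ * ρ) := rfl
  have hβpos : (0:ℝ) < β := by rw [hβ]; positivity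
  have hsq : Real.sqrt β ^ 2 = β := Real.sq_sqrt hβpos.le
  have hb : 0 < Real.sqrt β := Real.sqrt_pos.mpr hβpos
  have h1 : ξ^2/β ≤ (k*ρ)⁻¹ := by
    rw [div_le_iff₀ hβpos]
    have expand : (k*ρ)⁻¹ * β = pρ/(k*ρ) + ξ^2 := by rw [hβ]; field_simp
    have hnn : (0:ℝ) ≤ pρ/(k*ρ) := by positivity
    nlinarith [expand]
  have hδ1 : (δ*(ξ/Real.sqrt β))^2 ≤ 1 := by
    have e1 : (δ*(ξ/Real.sqrt β))^2 = δ^2 * (ξ^2/β) := by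
      rw [mul_pow, div_pow, hsq]
    rw [e1]
    calc δ^2*(ξ^2/β) ≤ (Real.sqrt (k*ρ))^2 * (k*ρ)⁻¹ := by
          apply mul_le_mul (pow_le_pow_left₀ hδ.le hδle1 2) h1 (by positivity) (by positivity)
      _ = 1 := by rw [Real.sq_sqrt hkρ.le]; field_simp
  have he1w : c / Real.sqrt β ≤ pθ * Real.sqrt θ / (Real.sqrt eθ * ρ) / Real.sqrt pρ := by
    rw [hc]
    apply div_le_div_of_nonneg_left (by positivity) (Real.sqrt_pos.mpr hpρ)
    apply Real.sqrt_le_sqrt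
    rw [hβ]
    nlinarith [sq_nonneg ξ, mul_nonneg (mul_nonneg (sq_nonneg ξ) hk.le) hρ.le]
  have he2 : (ξ*(μ/ρ)/Real.sqrt β)^2 ≤ ((μ/ρ)*(Real.sqrt (k*ρ))⁻¹)^2 := by
    have e2 : (ξ*(μ/ρ)/Real.sqrt β)^2 = (μ/ρ)^2*(ξ^2/β) := by
      rw [div_pow, hsq, mul_pow]; ring
    rw [e2]
    calc (μ/ρ)^2*(ξ^2/β) ≤ (μ/ρ)^2 * (k*ρ)⁻¹ :=
          mul_le_mul_of_nonneg_left h1 (by positivity)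
      _ = ((μ/ρ)*(Real.sqrt (k*ρ))⁻¹)^2 := by
          rw [mul_pow, inv_pow, Real.sq_sqrt hkρ.le]
  exact nsfk_main_aux u (Real.sqrt β) c (μ/ρ) (α/(eθ*ρ)) δ ξ (Real.sqrt (k*ρ))⁻¹
    (pθ * Real.sqrt θ / (Real.sqrt eθ * ρ) / Real.sqrt pρ)
    hb (by positivity) (by positivity) (by rw [hc]; positivity) hδ
    hδ1 hδ2 hδ3 he1w he2 V hV t ht
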